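/- Let f : ℝ^n → ℝ be differentiable with L-Lipschitz continuous gradient (L > 0), attaining a global minimum value f* = f(x*), and satisfying the Polyak–Łojasiewicz condition (1/2)‖∇f(x)‖² ≥ μ(f(x) − f*) for all x, for some μ ∈ (0, L]. If x⁺ = x − (1/L)∇f(x), then f(x⁺) − f* ≤ (1 − μ/L)(f(x) − f*). -/

import Mathlib

open RealInnerProductSpace intervalIntegral

lemma descent_lemma {E : Type*} [NormedAddCommGroup E] [InnerProductSpace ℝ E] [CompleteSpace E]
    (f : E → ℝ) (f' : E → E) (L : ℝ) (hL : 0 < L)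
    (hdiff : ∀ x, HasGradientAt f (f' x) x)
    (hlip : ∀ x y, ‖f' x - f' y‖ ≤ L * ‖x - y‖)
    (x v : E) : f (x + v) ≤ f x + ⟪f' x, v⟫ + L / 2 * ‖v‖ ^ 2 := by
  set φ : ℝ → ℝ := fun t => f (x + t • v) with hφ
  have hpath : ∀ t : ℝ, HasDerivAt φ ⟪f' (x + t • v), v⟫ t := by
    intro t
    have h1 : HasDerivAt (fun t : ℝ => x + t • v) v t := by
      simpa using ((hasDerivAt_id t).smul_const v).const_add x
    have h2 := (hdiff (x + t • v)).hasFDerivAt.comp_hasDerivAt t h1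
    exact h2
  have hcont : Continuous fun t : ℝ => ⟪f' (x + t • v), v⟫ := by
    have hlipf' : LipschitzWith (Real.toNNReal L) f' := by
      apply LipschitzWith.of_dist_le_mul
      intro a b
      simpa [dist_eq_norm, Real.coe_toNNReal _ hL.le] using hlip a b
    exact (hlipf'.continuous.comp (by continuity)).inner continuous_const
  have key : f (x + v) - f x = ∫ t in (0:ℝ)..1, ⟪f' (x + t • v), v⟫ := by
    have := integral_eq_sub_of_hasDerivAt (fun t _ => hpath t)
      (hcont.intervalIntegrable 0 1)
    simpa [hφ] using this.symm
  have bound : ∫ t in (0:ℝ)..1, ⟪f' (x + t • v), v⟫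
      ≤ ∫ t in (0:ℝ)..1, (⟪f' x, v⟫ + L * t * ‖v‖ ^ 2) := by
    apply integral_mono_on (by norm_num)
      (hcont.intervalIntegrable 0 1) (by apply Continuous.intervalIntegrable; continuity)
    intro t ht
    have h1 : ⟪f' (x + t • v) - f' x, v⟫ ≤ L * t * ‖v‖ ^ 2 := by
      calc ⟪f' (x + t • v) - f' x, v⟫ ≤ ‖f' (x + t • v) - f' x‖ * ‖v‖ :=
            real_inner_le_norm _ _
        _ ≤ (L * ‖(x + t • v) - x‖) * ‖v‖ := by
            gcongr; exact hlip _ _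
        _ = L * (|t| * ‖v‖) * ‖v‖ := by rw [add_sub_cancel_left, norm_smul]; norm_num
        _ = L * t * ‖v‖ ^ 2 := by rw [abs_of_nonneg ht.1]; ring
    have := inner_sub_left (𝕜 := ℝ) (f' (x + t • v)) (f' x) v
    linarith [h1, this.symm.le, this.le]
  have hint : ∫ t in (0:ℝ)..1, (⟪f' x, v⟫ + L * t * ‖v‖ ^ 2)
      = ⟪f' x, v⟫ + L / 2 * ‖v‖ ^ 2 := by
    rw [integral_add (by apply Continuous.intervalIntegrable; continuity)
      (by apply Continuous.intervalIntegrable; continuity)]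
    have : ∫ t in (0:ℝ)..1, L * t * ‖v‖ ^ 2 = L / 2 * ‖v‖ ^ 2 := by
      have : (fun t : ℝ => L * t * ‖v‖ ^ 2) = fun t : ℝ => (L * ‖v‖ ^ 2) * t := by
        ext t; ring
      rw [this, intervalIntegral.integral_const_mul, integral_id]
      ring
    simp [this]
  linarith [key, bound, hint]

theorem gradient_step_PL_rate
    (n : ℕ) (f : EuclideanSpace ℝ (Fin n) → ℝ)
    (f' : EuclideanSpace ℝ (Fin n) → EuclideanSpace ℝ (Fin n))
    (L μ : ℝ) (hL : 0 < L) (hμ : 0 < μ) (hμL : μ ≤ L)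
    (hdiff : ∀ x, HasGradientAt f (f' x) x)
    (hlip : ∀ x y, ‖f' x - f' y‖ ≤ L * ‖x - y‖)
    (xstar : EuclideanSpace ℝ (Fin n)) (hmin : ∀ x, f xstar ≤ f x)
    (hPL : ∀ x, μ * (f x - f xstar) ≤ 1 / 2 * ‖f' x‖ ^ 2)
    (x xplus : EuclideanSpace ℝ (Fin n))
    (hstep : xplus = x - (1 / L) • f' x) :
    f xplus - f xstar ≤ (1 - μ / L) * (f x - f xstar) := by
  have hd := descent_lemma f f' L hL hdiff hlip x (-(1 / L) • f' x)
  have hx : xplus = x + (-(1 / L) • f' x) := by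
    rw [hstep]; module
  have hip : ⟪f' x, -(1 / L) • f' x⟫ = -(1 / L) * ‖f' x‖ ^ 2 := by
    rw [real_inner_smul_right, real_inner_self_eq_norm_sq]
  have hnv : ‖-(1 / L) • f' x‖ ^ 2 = (1 / L) ^ 2 * ‖f' x‖ ^ 2 := by
    rw [norm_smul]
    rw [mul_pow]
    congr 1
    rw [norm_neg, Real.norm_eq_abs, abs_of_nonneg (by positivity), sq]
  rw [hx]
  have hPLx := hPL x
  have h1 : f (x + -(1 / L) • f' x) ≤ f x - 1 / (2 * L) * ‖f' x‖ ^ 2 := by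
    rw [hip, hnv] at hd
    have e : -(1/L) * ‖f' x‖ ^ 2 + L / 2 * ((1/L) ^ 2 * ‖f' x‖ ^ 2)
        = -(1 / (2 * L)) * ‖f' x‖ ^ 2 := by field_simp; ring
    linarith [hd, e]
  have h2 : 1 / (2 * L) * (2 * (μ * (f x - f xstar))) ≤ 1 / (2 * L) * ‖f' x‖ ^ 2 := by
    apply mul_le_mul_of_nonneg_left (by linarith [hPLx]) (by positivity)
  have : μ / L * (f x - f xstar) ≤ 1 / (2 * L) * ‖f' x‖ ^ 2 := by
    calc μ / L * (f x - f xstar) = 1 / (2 * L) * (2 * (μ * (f x - f xstar))) := by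
          field_simp
      _ ≤ _ := h2
  linarith [h1]
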